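/- (High-probability gradient bound.) Let p_i = σ(⟨x_i, θ*⟩), let a_i be independent with a_i = 1-p_i w.p. p_i and a_i = -p_i w.p. 1-p_i, let g = Σ_i a_i x_i, and let H = Σ_i p_i(1-p_i) x_i x_iᵀ be positive definite with minimum eigenvalue λ_min. Let X_max = max_i ‖x_i‖₂. Then for any c with 0 < c < √λ_min/(2 X_max), Pr(‖H^{-1} g‖_H ≥ c) ≤ 2d exp(-c²/(3d)). -/

import Mathlib

open MeasureTheory

noncomputable def logisticSigmoid (z : ℝ) : ℝ := 1 / (1 + Real.exp (-z))


lemma exp_quad {u : ℝ} (hu : |u| ≤ 1/2) : Real.exp u ≤ 1 + u + (2/3) * u^2 := by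
  have h1 : |u| ≤ 1 := hu.trans (by norm_num)
  have h := Real.exp_bound h1 (n := 4) (by norm_num)
  have hs : ∑ m ∈ Finset.range 4, u ^ m / m.factorial
      = 1 + u + u^2/2 + u^3/6 := by
    simp [Finset.sum_range_succ, Nat.factorial]
  rw [hs] at h
  have h2 := (abs_sub_le_iff.1 h).1
  norm_num [Nat.factorial] at h2
  have ha0 : (0:ℝ) ≤ |u| := abs_nonneg u
  have ha3 : u^3 ≤ |u| * u^2 := by
    calc u^3 ≤ |u^3| := le_abs_self _
    _ = |u| * u^2 := by rw [abs_pow, pow_succ, sq_abs]; ring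
  have ha4 : |u|^4 = u^2 * u^2 := by
    have : |u|^4 = (|u|^2)^2 := by ring
    rw [this, sq_abs]; ring
  have hm1 : |u| * u^2 ≤ (1/2) * u^2 := mul_le_mul_of_nonneg_right hu (sq_nonneg u)
  have hm2 : u^2 * u^2 ≤ (1/4) * u^2 := by nlinarith [sq_nonneg u, sq_abs u]
  rw [ha4] at h2
  nlinarith [sq_nonneg u]

lemma twoPoint_integral {Ω : Type*} [MeasurableSpace Ω] (P : Measure Ω) [IsProbabilityMeasure P]
    (a : Ω → ℝ) (hmeas : Measurable a) (u v pp : ℝ)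
    (hval : ∀ ω, a ω = u ∨ a ω = v)
    (hP : P {ω | a ω = u} = ENNReal.ofReal pp) (hp0 : 0 ≤ pp)
    (f : ℝ → ℝ) : ∫ ω, f (a ω) ∂P = pp * f u + (1 - pp) * f v := by
  have hA : MeasurableSet {ω | a ω = u} := hmeas (measurableSet_singleton u)
  have hfa : (fun ω => f (a ω))
      = fun ω => Set.indicator {ω | a ω = u} (fun _ => f u - f v) ω + f v := by
    funext ω
    by_cases hm : a ω = u
    · simp [Set.indicator_of_mem, hm, Set.mem_setOf_eq]
    · rcases hval ω with h | h
      · exact absurd h hm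
      · have hnm : ω ∉ {ω | a ω = u} := hm
        rw [Set.indicator_of_notMem hnm, h, zero_add]
  rw [hfa, integral_add ((integrable_const _).indicator hA) (integrable_const _),
    integral_indicator_const _ hA, integral_const]
  simp [hP, ENNReal.toReal_ofReal hp0]
  rw [measureReal_def, hP, ENNReal.toReal_ofReal hp0]
  ring

lemma tail_bound {n : ℕ} {Ω : Type*} [MeasurableSpace Ω] (P : Measure Ω) [IsProbabilityMeasure P]
    (a : Fin n → Ω → ℝ) (hmeas : ∀ i, Measurable (a i))
    (p : Fin n → ℝ) (hp0 : ∀ i, 0 ≤ p i) (hp1 : ∀ i, p i ≤ 1)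
    (hval : ∀ i ω, a i ω = 1 - p i ∨ a i ω = -(p i))
    (hprob1 : ∀ i, P {ω | a i ω = 1 - p i} = ENNReal.ofReal (p i))
    (hindep : ProbabilityTheory.iIndepFun a P)
    (b : Fin n → ℝ) (t : ℝ) (ht : 0 < t)
    (hbt : ∀ i, t * |b i| ≤ 1/2)
    (hvar : ∑ i, p i * (1 - p i) * b i ^ 2 ≤ 1) :
    P {ω | t ≤ ∑ i, a i ω * b i} ≤ ENNReal.ofReal (Real.exp (-(t^2)/3)) := by
  classical
  set Y : Fin n → Ω → ℝ := fun i ω => a i ω * b i with hY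
  have hYmeas : ∀ i, Measurable (Y i) := fun i => (hmeas i).mul_const _
  have hYindep : ProbabilityTheory.iIndepFun Y P :=
    hindep.comp (fun i y => y * b i) (fun i => measurable_mul_const _)
  have habs : ∀ i ω, |a i ω| ≤ 1 := by
    intro i ω
    rcases hval i ω with h | h <;> rw [h, abs_le] <;>
      constructor <;> nlinarith [hp0 i, hp1 i]
  have hint : ∀ i, Integrable (fun ω => Real.exp (t * Y i ω)) P := by
    intro i
    refine Integrable.mono' (integrable_const (Real.exp (t * |b i|)))
      (((hYmeas i).const_mul t).exp.aestronglyMeasurable) (ae_of_all _ fun ω => ?_)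
    rw [Real.norm_eq_abs, Real.abs_exp, Real.exp_le_exp]
    calc t * Y i ω ≤ |t * Y i ω| := le_abs_self _
      _ = t * (|a i ω| * |b i|) := by rw [abs_mul, abs_of_nonneg ht.le, hY]; simp [abs_mul]
      _ ≤ t * (1 * |b i|) := by
          apply mul_le_mul_of_nonneg_left _ ht.le
          exact mul_le_mul_of_nonneg_right (habs i ω) (abs_nonneg _)
      _ = t * |b i| := by ring
  have hmgf : ∀ i, ProbabilityTheory.mgf (Y i) P t
      ≤ Real.exp ((2/3) * t^2 * (p i * (1 - p i) * b i ^ 2)) := by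
    intro i
    have hcalc : ProbabilityTheory.mgf (Y i) P t
        = p i * Real.exp (t * ((1 - p i) * b i)) + (1 - p i) * Real.exp (t * (-(p i) * b i)) := by
      have := twoPoint_integral P (a i) (hmeas i) (1 - p i) (-(p i)) (p i)
        (hval i) (hprob1 i) (hp0 i) (fun y => Real.exp (t * (y * b i)))
      simpa [ProbabilityTheory.mgf, hY] using this
    rw [hcalc]
    set u1 := t * ((1 - p i) * b i) with hu1
    set u2 := t * (-(p i) * b i) with hu2
    have hb1 : |u1| ≤ 1/2 := by
      rw [hu1, abs_mul, abs_mul, abs_of_nonneg ht.le, abs_of_nonneg (by linarith [hp1 i])]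
      calc t * ((1 - p i) * |b i|) ≤ t * (1 * |b i|) := by
            apply mul_le_mul_of_nonneg_left _ ht.le
            exact mul_le_mul_of_nonneg_right (by linarith [hp0 i]) (abs_nonneg _)
        _ = t * |b i| := by ring
        _ ≤ 1/2 := hbt i
    have hb2 : |u2| ≤ 1/2 := by
      rw [hu2, abs_mul, abs_mul, abs_neg, abs_of_nonneg ht.le, abs_of_nonneg (hp0 i)]
      calc t * (p i * |b i|) ≤ t * (1 * |b i|) := by
            apply mul_le_mul_of_nonneg_left _ ht.le
            exact mul_le_mul_of_nonneg_right (hp1 i) (abs_nonneg _)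
        _ = t * |b i| := by ring
        _ ≤ 1/2 := hbt i
    have e1 := exp_quad hb1
    have e2 := exp_quad hb2
    have step : p i * Real.exp u1 + (1 - p i) * Real.exp u2
        ≤ 1 + (2/3) * t^2 * (p i * (1 - p i) * b i ^ 2) := by
      have key : p i * (1 + u1 + (2/3) * u1^2) + (1 - p i) * (1 + u2 + (2/3) * u2^2)
          = 1 + (2/3) * t^2 * (p i * (1 - p i) * b i ^ 2) := by
        rw [hu1, hu2]; ring
      nlinarith [hp0 i, hp1 i]
    calc p i * Real.exp u1 + (1 - p i) * Real.exp u2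
        ≤ 1 + (2/3) * t^2 * (p i * (1 - p i) * b i ^ 2) := step
      _ ≤ Real.exp ((2/3) * t^2 * (p i * (1 - p i) * b i ^ 2)) := by
          linarith [Real.add_one_le_exp ((2/3) * t^2 * (p i * (1 - p i) * b i ^ 2))]
  have hSint : Integrable (fun ω => Real.exp (t * (∑ i, Y i) ω)) P :=
    hYindep.integrable_exp_mul_sum hYmeas (fun i _ => hint i)
  have hch := ProbabilityTheory.measure_ge_le_exp_mul_mgf (X := ∑ i, Y i) (μ := P) t ht.le hSint
  have hset : {ω | t ≤ (∑ i, Y i) ω} = {ω | t ≤ ∑ i, a i ω * b i} := by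
    ext ω; simp [hY, Finset.sum_apply]
  rw [hset] at hch
  have hprod : ProbabilityTheory.mgf (∑ i, Y i) P t ≤ Real.exp ((2/3) * t^2) := by
    rw [hYindep.mgf_sum hYmeas]
    calc ∏ i, ProbabilityTheory.mgf (Y i) P t
        ≤ ∏ i, Real.exp ((2/3) * t^2 * (p i * (1 - p i) * b i ^ 2)) := by
          apply Finset.prod_le_prod (fun i _ => ProbabilityTheory.mgf_nonneg)
            (fun i _ => hmgf i)
      _ = Real.exp (∑ i, (2/3) * t^2 * (p i * (1 - p i) * b i ^ 2)) := by
          rw [Real.exp_sum]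
      _ ≤ Real.exp ((2/3) * t^2) := by
          rw [Real.exp_le_exp, ← Finset.mul_sum]
          calc (2/3) * t^2 * (∑ i, p i * (1 - p i) * b i ^ 2)
              ≤ (2/3) * t^2 * 1 := by
                apply mul_le_mul_of_nonneg_left hvar (by positivity)
            _ = (2/3) * t^2 := by ring
  have hfinal : (P {ω | t ≤ ∑ i, a i ω * b i}).toReal ≤ Real.exp (-(t^2)/3) := by
    calc (P {ω | t ≤ ∑ i, a i ω * b i}).toReal
        ≤ Real.exp (-t * t) * ProbabilityTheory.mgf (∑ i, Y i) P t := hch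
      _ ≤ Real.exp (-t * t) * Real.exp ((2/3) * t^2) :=
          mul_le_mul_of_nonneg_left hprod (Real.exp_nonneg _)
      _ = Real.exp (-(t^2)/3) := by rw [← Real.exp_add]; ring_nf
  calc P {ω | t ≤ ∑ i, a i ω * b i}
      = ENNReal.ofReal (P {ω | t ≤ ∑ i, a i ω * b i}).toReal :=
        (ENNReal.ofReal_toReal (measure_ne_top _ _)).symm
    _ ≤ ENNReal.ofReal (Real.exp (-(t^2)/3)) := ENNReal.ofReal_le_ofReal hfinal

/-- high-probability gradient bound: with coefficients `a i`
independent, equal to `1 - p i` w.p. `p i` and `-(p i)` w.p. `1 - p i`,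
`g = ∑ i, a i • x i`, `H = ∑ i, p i (1-p i) x i x iᵀ` positive definite with
minimum eigenvalue `λ_min`, and `X_max ≥ ‖x i‖₂` for all `i`: for any
`0 < c < √λ_min / (2 X_max)`,
`Pr(‖H⁻¹ g‖_H ≥ c) ≤ 2 d exp(-c²/(3d))`. -/
theorem grad_high_prob_bound
    {d n : ℕ} {Ω : Type*} [MeasurableSpace Ω] (P : Measure Ω) [IsProbabilityMeasure P]
    (x : Fin n → EuclideanSpace ℝ (Fin d)) (θstar : EuclideanSpace ℝ (Fin d))
    (p : Fin n → ℝ) (hp : ∀ i, p i = logisticSigmoid (inner ℝ (x i) θstar))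
    (Xmax : ℝ) (hXpos : 0 < Xmax) (hX : ∀ i, ‖x i‖ ≤ Xmax)
    (H : Matrix (Fin d) (Fin d) ℝ)
    (hH : H = ∑ i, (p i * (1 - p i)) • Matrix.vecMulVec (fun k => x i k) (fun k => x i k))
    (hHpd : H.PosDef)
    (lammin : ℝ) (hlampos : 0 < lammin)
    (hlam : ∀ v : Fin d → ℝ,
      lammin * (∑ j, v j ^ 2) ≤ dotProduct v (H.mulVec v))
    (a : Fin n → Ω → ℝ)
    (hmeas : ∀ i, Measurable (a i))
    (hval : ∀ i ω, a i ω = 1 - p i ∨ a i ω = -(p i))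
    (hprob1 : ∀ i, P {ω | a i ω = 1 - p i} = ENNReal.ofReal (p i))
    (hindep : ProbabilityTheory.iIndepFun a P)
    (c : ℝ) (hc0 : 0 < c) (hc : c < Real.sqrt lammin / (2 * Xmax)) :
    P {ω |
        c ≤ Real.sqrt (dotProduct
          (H⁻¹.mulVec (∑ i, a i ω • (fun k => x i k)))
          (H.mulVec (H⁻¹.mulVec (∑ i, a i ω • (fun k => x i k)))))} ≤
      ENNReal.ofReal (2 * d * Real.exp (-(c ^ 2) / (3 * d))) := by
  classical
  have hp0 : ∀ i, 0 ≤ p i := by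
    intro i; rw [hp i]; unfold logisticSigmoid; positivity
  have hp1 : ∀ i, p i ≤ 1 := by
    intro i; rw [hp i]; unfold logisticSigmoid
    rw [div_le_one (by positivity)]
    linarith [Real.exp_pos (-(inner ℝ (x i) θstar : ℝ))]
  by_cases hd : d = 0
  · subst hd
    have hempty : {ω |
        c ≤ Real.sqrt (dotProduct
          (H⁻¹.mulVec (∑ i, a i ω • (fun k => x i k)))
          (H.mulVec (H⁻¹.mulVec (∑ i, a i ω • (fun k => x i k)))))} = ∅ := by
      ext ω
      simp only [Set.mem_setOf_eq, Set.mem_empty_iff_false, iff_false, not_le]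
      have hz : dotProduct
          (H⁻¹.mulVec (∑ i, a i ω • (fun k => x i k)))
          (H.mulVec (H⁻¹.mulVec (∑ i, a i ω • (fun k => x i k)))) = 0 := by
        simp [dotProduct]
      rw [hz, Real.sqrt_zero]; exact hc0
    rw [hempty]; simp
  -- main case
  have hdpos : 0 < (d : ℝ) := by exact_mod_cast Nat.pos_of_ne_zero hd
  haveI : Nonempty (Fin d) := ⟨⟨0, Nat.pos_of_ne_zero hd⟩⟩
  have hHerm : H.IsHermitian := hHpd.1
  set V : OrthonormalBasis (Fin d) ℝ (EuclideanSpace ℝ (Fin d)) := hHerm.eigenvectorBasis with hV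
  set lam : Fin d → ℝ := hHerm.eigenvalues with hlamdef
  set E : (Fin d → ℝ) → EuclideanSpace ℝ (Fin d) := fun y => WithLp.toLp 2 y with hE
  set vv : Fin d → Fin d → ℝ := fun k => ⇑(V k) with hvv
  have heig : ∀ k, H.mulVec (vv k) = lam k • vv k := fun k => hHerm.mulVec_eigenvectorBasis k
  have hinE : ∀ (y z : EuclideanSpace ℝ (Fin d)),
      (inner ℝ y z : ℝ) = dotProduct (⇑y) (⇑z) := by
    intro y z
    simp [PiLp.inner_apply, RCLike.inner_apply, dotProduct, mul_comm]
  have hpar : ∀ w g : Fin d → ℝ,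
      ∑ k, (dotProduct w (vv k)) * (dotProduct (vv k) g)
        = dotProduct w g := by
    intro w g
    have h := V.sum_inner_mul_inner (E w) (E g)
    simp only [hinE, hE, WithLp.ofLp_toLp] at h
    exact h
  have hVnorm : ∀ k, dotProduct (vv k) (vv k) = 1 := by
    intro k
    have h : (inner ℝ (V k) (V k) : ℝ) = 1 := by
      rw [real_inner_self_eq_norm_sq, V.orthonormal.1 k, one_pow]
    rw [hinE] at h
    exact h
  have hlamk : ∀ k, lammin ≤ lam k := by
    intro k
    have h1 := hlam (vv k)
    have h2 : dotProduct (vv k) (H.mulVec (vv k)) = lam k := by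
      rw [heig k, dotProduct_smul, smul_eq_mul, hVnorm k, mul_one]
    have h3 : (∑ j, (vv k j) ^ 2) = 1 := by
      simpa [dotProduct, sq] using hVnorm k
    rw [h3, mul_one, h2] at h1
    exact h1
  have hlamkpos : ∀ k, 0 < lam k := fun k => lt_of_lt_of_le hlampos (hlamk k)
  have hsqlam : ∀ k, 0 < Real.sqrt (lam k) := fun k => Real.sqrt_pos.2 (hlamkpos k)
  have hsqlm : 0 < Real.sqrt lammin := Real.sqrt_pos.2 hlampos
  set uu : Fin d → Fin d → ℝ := fun k => (Real.sqrt (lam k))⁻¹ • vv k with huu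
  set b : Fin n → Fin d → ℝ := fun i k => ∑ j, x i j * uu k j with hb
  -- quadratic form identity
  have hquadmv : ∀ w : Fin d → ℝ, H.mulVec w
      = fun j => ∑ i, (p i * (1 - p i)) * (∑ k, x i k * w k) * x i j := by
    intro w
    funext j
    rw [hH]
    simp only [Matrix.mulVec, dotProduct, Matrix.sum_apply, Matrix.smul_apply,
      Matrix.vecMulVec_apply, smul_eq_mul, Finset.sum_mul]
    rw [Finset.sum_comm]
    refine Finset.sum_congr rfl fun i _ => ?_
    rw [Finset.mul_sum, Finset.sum_mul]
    exact Finset.sum_congr rfl fun k _ => by ring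
  have hquad : ∀ w : Fin d → ℝ, dotProduct w (H.mulVec w)
      = ∑ i, p i * (1 - p i) * (∑ j, x i j * w j) ^ 2 := by
    intro w
    rw [hquadmv w]
    simp only [dotProduct, Finset.mul_sum]
    rw [Finset.sum_comm]
    refine Finset.sum_congr rfl fun i _ => ?_
    have h1 : ∀ j, w j * ((∑ k, p i * (1 - p i) * (x i k * w k)) * x i j)
        = (x i j * w j) * (∑ k, p i * (1 - p i) * (x i k * w k)) := fun j => by ring
    simp only [h1]
    rw [← Finset.sum_mul, ← Finset.mul_sum, sq]
    ring
  -- bound on b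
  have hbbound : ∀ i k, |b i k| ≤ Xmax / Real.sqrt lammin := by
    intro i k
    have hbik : b i k = (inner ℝ (x i) (E (uu k)) : ℝ) := (hinE (x i) (E (uu k))).symm
    have hEu : E (uu k) = (Real.sqrt (lam k))⁻¹ • V k := rfl
    have h3 : ‖E (uu k)‖ = (Real.sqrt (lam k))⁻¹ := by
      rw [hEu, norm_smul, Real.norm_eq_abs, V.orthonormal.1 k, mul_one,
        abs_of_nonneg (inv_nonneg.2 (Real.sqrt_nonneg (lam k)))]
    rw [hbik]
    calc |(inner ℝ (x i) (E (uu k)) : ℝ)| ≤ ‖x i‖ * ‖E (uu k)‖ := abs_real_inner_le_norm _ _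
      _ ≤ Xmax * (Real.sqrt lammin)⁻¹ := by
          rw [h3]
          refine mul_le_mul (hX i) ?_ (by positivity) hXpos.le
          exact inv_anti₀ hsqlm (Real.sqrt_le_sqrt (hlamk k))
      _ = Xmax / Real.sqrt lammin := by rw [div_eq_mul_inv]
  -- variance identity
  have hvar1 : ∀ k, ∑ i, p i * (1 - p i) * (b i k) ^ 2 ≤ 1 := by
    intro k
    have h1 : ∑ i, p i * (1 - p i) * (b i k) ^ 2
        = dotProduct (uu k) (H.mulVec (uu k)) := (hquad (uu k)).symm
    have h2 : H.mulVec (uu k) = (Real.sqrt (lam k))⁻¹ • (lam k • vv k) := by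
      rw [huu]
      rw [Matrix.mulVec_smul, heig k]
    rw [h1, h2, huu]
    rw [smul_dotProduct, dotProduct_smul, dotProduct_smul, hVnorm k]
    simp only [smul_eq_mul, mul_one]
    have hll : Real.sqrt (lam k) * Real.sqrt (lam k) = lam k :=
      Real.mul_self_sqrt (hlamkpos k).le
    have h4 : (Real.sqrt (lam k))⁻¹ * ((Real.sqrt (lam k))⁻¹ * lam k) = 1 := by
      rw [← mul_assoc, ← mul_inv, hll, inv_mul_cancel₀ (hlamkpos k).ne']
    rw [h4]
  -- symmetry of H
  have hT : H.transpose = H := by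
    rw [← Matrix.conjTranspose_eq_transpose_of_trivial]; exact hHerm
  have hsym : ∀ y z : Fin d → ℝ,
      dotProduct y (H.mulVec z) = dotProduct z (H.mulVec y) := by
    intro y z
    rw [Matrix.dotProduct_mulVec, ← Matrix.mulVec_transpose, hT, dotProduct_comm]
  have hdet : IsUnit H.det := isUnit_iff_ne_zero.2 hHpd.det_pos.ne'
  -- key identity
  have hkey : ∀ ω, dotProduct (H⁻¹.mulVec (∑ i, a i ω • (fun k => x i k)))
      (H.mulVec (H⁻¹.mulVec (∑ i, a i ω • (fun k => x i k))))
      = ∑ k, (∑ i, a i ω * b i k) ^ 2 := by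
    intro ω
    set g : Fin d → ℝ := (∑ i, a i ω • (fun k => x i k)) with hgdef
    set w : Fin d → ℝ := H⁻¹.mulVec g with hwdef
    have hHw : H.mulVec w = g := by
      rw [hwdef, Matrix.mulVec_mulVec, Matrix.mul_nonsing_inv H hdet, Matrix.one_mulVec]
    have hVG : ∀ k, dotProduct (vv k) g = lam k * dotProduct w (vv k) := by
      intro k
      rw [← hHw, hsym (vv k) w, heig k, dotProduct_smul, smul_eq_mul]
    have hgj : ∀ j, g j = ∑ i, a i ω * x i j := by
      intro j; rw [hgdef]; simp [Finset.sum_apply]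
    have hSdot : ∀ k, (∑ i, a i ω * b i k) = dotProduct g (uu k) := by
      intro k
      have h5 : dotProduct g (uu k) = ∑ i, a i ω * b i k := by
        simp only [dotProduct, hgj, Finset.sum_mul]
        rw [Finset.sum_comm]
        refine Finset.sum_congr rfl fun i _ => ?_
        simp only [hb, Finset.mul_sum]
        exact Finset.sum_congr rfl fun j _ => by ring
      exact h5.symm
    have hSval : ∀ k, dotProduct g (uu k)
        = (Real.sqrt (lam k))⁻¹ * (lam k * dotProduct w (vv k)) := by
      intro k
      rw [huu]
      rw [dotProduct_smul, smul_eq_mul]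
      congr 1
      rw [dotProduct_comm, hVG k]
    calc dotProduct w (H.mulVec w) = dotProduct w g := by rw [hHw]
      _ = ∑ k, (dotProduct w (vv k)) * (dotProduct (vv k) g) := (hpar w g).symm
      _ = ∑ k, (∑ i, a i ω * b i k) ^ 2 := by
          refine Finset.sum_congr rfl fun k _ => ?_
          rw [hSdot k, hSval k, hVG k]
          have h9 : ((Real.sqrt (lam k))⁻¹) ^ 2 = (lam k)⁻¹ := by
            rw [← Real.sqrt_inv, Real.sq_sqrt (inv_nonneg.2 (hlamkpos k).le)]
          rw [mul_pow, h9, mul_pow]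
          have hlne : lam k ≠ 0 := (hlamkpos k).ne'
          field_simp
  -- threshold
  set t : ℝ := c / Real.sqrt d with ht
  have hsqd : 0 < Real.sqrt d := Real.sqrt_pos.2 hdpos
  have htpos : 0 < t := div_pos hc0 hsqd
  have hsqd1 : 1 ≤ Real.sqrt d := by
    rw [show (1:ℝ) = Real.sqrt 1 from (Real.sqrt_one).symm]
    exact Real.sqrt_le_sqrt (by exact_mod_cast Nat.one_le_iff_ne_zero.2 hd)
  have htc : t ≤ c := by
    rw [ht]; exact div_le_self hc0.le hsqd1
  have ht2 : t ^ 2 = c ^ 2 / d := by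
    rw [ht, div_pow, Real.sq_sqrt hdpos.le]
  -- t * |b| ≤ 1/2
  have hbt : ∀ i k, t * |b i k| ≤ 1 / 2 := by
    intro i k
    have h1 : c * (2 * Xmax) < Real.sqrt lammin := (lt_div_iff₀ (by positivity)).1 hc
    have h2 : t * |b i k| ≤ c * (Xmax / Real.sqrt lammin) :=
      mul_le_mul htc (hbbound i k) (abs_nonneg _) hc0.le
    have h3 : c * (Xmax / Real.sqrt lammin) < 1/2 := by
      rw [← mul_div_assoc, div_lt_iff₀ hsqlm]
      nlinarith
    linarith
  -- tail events
  set S : Fin d → Ω → ℝ := fun k ω => ∑ i, a i ω * b i k with hS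
  have htail1 : ∀ k, P {ω | t ≤ S k ω} ≤ ENNReal.ofReal (Real.exp (-(t^2)/3)) := by
    intro k
    exact tail_bound P a hmeas p hp0 hp1 hval hprob1 hindep (fun i => b i k) t htpos
      (fun i => hbt i k) (hvar1 k)
  have htail2 : ∀ k, P {ω | t ≤ -(S k ω)} ≤ ENNReal.ofReal (Real.exp (-(t^2)/3)) := by
    intro k
    have hset : {ω | t ≤ -(S k ω)} = {ω | t ≤ ∑ i, a i ω * (-(b i k))} := by
      ext ω
      simp only [Set.mem_setOf_eq, hS, mul_neg, Finset.sum_neg_distrib]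
    rw [hset]
    refine tail_bound P a hmeas p hp0 hp1 hval hprob1 hindep (fun i => -(b i k)) t htpos
      (fun i => ?_) ?_
    · rw [abs_neg]; exact hbt i k
    · simpa [neg_pow] using hvar1 k
  -- inclusion
  have hincl : {ω | c ≤ Real.sqrt (dotProduct
          (H⁻¹.mulVec (∑ i, a i ω • (fun k => x i k)))
          (H.mulVec (H⁻¹.mulVec (∑ i, a i ω • (fun k => x i k)))))}
      ⊆ ⋃ k : Fin d, ({ω | t ≤ S k ω} ∪ {ω | t ≤ -(S k ω)}) := by
    intro ω hω
    simp only [Set.mem_setOf_eq] at hω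
    rw [hkey ω] at hω
    have hQ0 : 0 ≤ ∑ k, (∑ i, a i ω * b i k) ^ 2 :=
      Finset.sum_nonneg fun k _ => sq_nonneg _
    have hc2 : c ^ 2 ≤ ∑ k, (∑ i, a i ω * b i k) ^ 2 := by
      nlinarith [Real.sq_sqrt hQ0, Real.sqrt_nonneg (∑ k, (∑ i, a i ω * b i k) ^ 2)]
    by_contra hcon
    simp only [Set.mem_iUnion, Set.mem_union, Set.mem_setOf_eq, not_exists, not_or,
      not_le] at hcon
    have hlt : ∀ k : Fin d, (∑ i, a i ω * b i k) ^ 2 < t ^ 2 := by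
      intro k
      have h1 := (hcon k).1
      have h2 := (hcon k).2
      have habs : |S k ω| < t := abs_lt.2 ⟨by linarith, h1⟩
      calc (∑ i, a i ω * b i k) ^ 2 = |S k ω| ^ 2 := by rw [sq_abs]
        _ < t ^ 2 := by nlinarith [abs_nonneg (S k ω)]
    have hsum : ∑ k, (∑ i, a i ω * b i k) ^ 2 < ∑ _k : Fin d, t ^ 2 :=
      Finset.sum_lt_sum_of_nonempty Finset.univ_nonempty fun k _ => hlt k
    rw [Finset.sum_const, Finset.card_univ, Fintype.card_fin, nsmul_eq_mul, ht2] at hsum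
    have hdc : (d:ℝ) * (c^2 / d) = c^2 := by field_simp
    rw [hdc] at hsum
    linarith
  -- final computation
  have hexp : -(t^2)/3 = -(c ^ 2) / (3 * d) := by
    rw [ht2]; field_simp
  calc P {ω | c ≤ Real.sqrt (dotProduct
          (H⁻¹.mulVec (∑ i, a i ω • (fun k => x i k)))
          (H.mulVec (H⁻¹.mulVec (∑ i, a i ω • (fun k => x i k)))))}
      ≤ P (⋃ k : Fin d, ({ω | t ≤ S k ω} ∪ {ω | t ≤ -(S k ω)})) := measure_mono hincl
    _ ≤ ∑' k : Fin d, P ({ω | t ≤ S k ω} ∪ {ω | t ≤ -(S k ω)}) := measure_iUnion_le _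
    _ = ∑ k : Fin d, P ({ω | t ≤ S k ω} ∪ {ω | t ≤ -(S k ω)}) := tsum_fintype _
    _ ≤ ∑ k : Fin d, (ENNReal.ofReal (Real.exp (-(t^2)/3))
          + ENNReal.ofReal (Real.exp (-(t^2)/3))) :=
        Finset.sum_le_sum fun k _ =>
          (measure_union_le _ _).trans (add_le_add (htail1 k) (htail2 k))
    _ = ENNReal.ofReal (2 * d * Real.exp (-(c ^ 2) / (3 * d))) := by
        rw [Finset.sum_const, Finset.card_univ, Fintype.card_fin,
          ← ENNReal.ofReal_add (Real.exp_nonneg _) (Real.exp_nonneg _), nsmul_eq_mul,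
          show ((d:ℕ) : ENNReal) = ENNReal.ofReal (d:ℝ) from (ENNReal.ofReal_natCast d).symm,
          ← ENNReal.ofReal_mul (by positivity : (0:ℝ) ≤ (d:ℝ))]
        congr 1
        rw [hexp]
        ring
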